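/- Let S = [[A, -AK],[K*A, D]] on H₊ ⊕ H₋ with A uniformly positive, ‖K‖ < 1, D self-adjoint with D + K*AK uniformly positive. If λ = x + iy with y ≠ 0 and x² - 2a₊x + y² ≥ 0, where a₊ = sup W(A), then λ is in the resolvent set of S. Equivalently, every non-real spectral point λ of S satisfies |λ - a₊| < a₊. -/

import Mathlib

open ContinuousLinearMap

/-- The block operator `S = [[A, -AK],[K*A, D]]` acting on `Hp × Hm`. -/
noncomputable def blockOp {Hp Hm : Type*} [NormedAddCommGroup Hp] [InnerProductSpace ℂ Hp]
    [NormedAddCommGroup Hm] [InnerProductSpace ℂ Hm] [CompleteSpace Hp] [CompleteSpace Hm]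
    (A : Hp →L[ℂ] Hp) (K : Hm →L[ℂ] Hp) (D : Hm →L[ℂ] Hm) :
    (Hp × Hm) →L[ℂ] (Hp × Hm) :=
  ((A ∘L fst ℂ Hp Hm) - (A ∘L K ∘L snd ℂ Hp Hm)).prod
    (((adjoint K) ∘L A ∘L fst ℂ Hp Hm) + (D ∘L snd ℂ Hp Hm))


/-- An operator bounded below whose adjoint is bounded below is a unit. -/
lemma isUnit_of_bddBelow_adj {H : Type*} [NormedAddCommGroup H] [InnerProductSpace ℂ H]
    [CompleteSpace H] (T : H →L[ℂ] H) {c : ℝ} (hc : 0 < c)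
    (hT : ∀ v, c * ‖v‖ ≤ ‖T v‖) (hT' : ∀ v, c * ‖v‖ ≤ ‖adjoint T v‖) :
    IsUnit T := by
  have hinj : LinearMap.ker (T : H →ₗ[ℂ] H) = ⊥ := by
    rw [LinearMap.ker_eq_bot']
    intro v hv
    have := hT v
    rw [show T v = 0 from hv, norm_zero] at this
    have : ‖v‖ ≤ 0 := by nlinarith
    simpa [norm_le_zero_iff] using this
  have hanti : AntilipschitzWith (⟨c⁻¹, by positivity⟩ : NNReal) T := by
    apply T.antilipschitz_of_bound
    intro v
    have := hT v
    show ‖v‖ ≤ c⁻¹ * ‖T v‖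
    rw [inv_mul_eq_div, le_div_iff₀ hc]
    nlinarith [hT v]
  have hclosed : IsClosed (LinearMap.range (T : H →ₗ[ℂ] H) : Set H) := by
    rw [LinearMap.coe_range, ContinuousLinearMap.coe_coe]
    exact hanti.isClosed_range T.uniformContinuous
  have : CompleteSpace (LinearMap.range (T : H →ₗ[ℂ] H)) := hclosed.completeSpace_coe
  have hsurj : LinearMap.range (T : H →ₗ[ℂ] H) = ⊤ := by
    rw [← Submodule.orthogonal_eq_bot_iff]
    rw [Submodule.eq_bot_iff]
    intro w hw
    have hTw : adjoint T w = 0 := by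
      have h0 : ∀ v : H, inner ℂ (T v) w = (0 : ℂ) :=
        fun v => (Submodule.mem_orthogonal _ _).1 hw _ ⟨v, rfl⟩
      have : inner ℂ (adjoint T w) (adjoint T w) = (0 : ℂ) := by
        rw [adjoint_inner_left, ← inner_conj_symm, h0, map_zero]
      simpa [inner_self_eq_zero] using this
    have := hT' w
    rw [hTw, norm_zero] at this
    have : ‖w‖ ≤ 0 := by nlinarith
    simpa [norm_le_zero_iff] using this
  let e := ContinuousLinearEquiv.ofBijective T hinj hsurj
  refine isUnit_iff_exists.2 ⟨e.symm.toContinuousLinearMap, ?_, ?_⟩ <;> ext v <;>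
    simp [ContinuousLinearMap.mul_apply, e]


lemma nr_le {Hp : Type*} [NormedAddCommGroup Hp] [InnerProductSpace ℂ Hp]
    (A : Hp →L[ℂ] Hp) (aPlus : ℝ)
    (haPlus : IsLUB {r : ℝ | ∃ x : Hp, ‖x‖ = 1 ∧ r = (inner ℂ (A x) x : ℂ).re} aPlus)
    (u : Hp) : (inner ℂ (A u) u : ℂ).re ≤ aPlus * ‖u‖ ^ 2 := by
  rcases eq_or_ne u 0 with rfl | hu
  · simp
  · have hn : (0:ℝ) < ‖u‖ := norm_pos_iff.2 hu
    set c : ℝ := ‖u‖⁻¹ with hc_def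
    have he : ‖(c : ℂ) • u‖ = 1 := by
      rw [norm_smul]
      simp [hc_def, hn.ne']
    have hle : (inner ℂ (A ((c : ℂ) • u)) ((c : ℂ) • u) : ℂ).re ≤ aPlus :=
      haPlus.1 ⟨(c : ℂ) • u, he, rfl⟩
    have hcalc : (inner ℂ (A ((c : ℂ) • u)) ((c : ℂ) • u) : ℂ)
        = ((c ^ 2 : ℝ) : ℂ) * (inner ℂ (A u) u : ℂ) := by
      rw [map_smul, inner_smul_left, inner_smul_right, Complex.conj_ofReal]
      push_cast
      ring
    rw [hcalc, Complex.re_ofReal_mul] at hle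
    have h5 : c ^ 2 * ‖u‖ ^ 2 = 1 := by
      rw [← mul_pow, hc_def, inv_mul_cancel₀ hn.ne', one_pow]
    have h6 := mul_le_mul_of_nonneg_right hle (sq_nonneg ‖u‖)
    have h7 : (inner ℂ (A u) u : ℂ).re * (c ^ 2 * ‖u‖ ^ 2) = (inner ℂ (A u) u : ℂ).re := by
      rw [h5, mul_one]
    nlinarith [h6, h7]

set_option maxHeartbeats 1000000 in
lemma schur_lower {Hp Hm : Type*} [NormedAddCommGroup Hp] [InnerProductSpace ℂ Hp]
    [NormedAddCommGroup Hm] [InnerProductSpace ℂ Hm] [CompleteSpace Hp] [CompleteSpace Hm]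
    (A : Hp →L[ℂ] Hp) (K : Hm →L[ℂ] Hp) (D : Hm →L[ℂ] Hm)
    (hA : IsSelfAdjoint A)
    (hApos : ∃ α > (0:ℝ), ∀ x : Hp, α * ‖x‖ ^ 2 ≤ (inner ℂ (A x) x : ℂ).re)
    (hK : ‖K‖ < 1) (hD : IsSelfAdjoint D)
    (aPlus : ℝ)
    (haPlus : IsLUB {r : ℝ | ∃ x : Hp, ‖x‖ = 1 ∧ r = (inner ℂ (A x) x : ℂ).re} aPlus)
    (μ : ℂ) (hcond : 0 ≤ μ.re ^ 2 - 2 * aPlus * μ.re + μ.im ^ 2)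
    (R : Hp →L[ℂ] Hp) (hR1 : ∀ w, (A - μ • 1) (R w) = w) (hR2 : ∀ w, R ((A - μ • 1) w) = w) :
    ∀ v : Hm, ((1 - ‖K‖ ^ 2) * |μ.im|) * ‖v‖ ≤
      ‖((D - μ • (1 : Hm →L[ℂ] Hm)) + adjoint K ∘L (A ∘L (R ∘L (A ∘L K)))) v‖ := by
  intro v
  rcases eq_or_ne v 0 with rfl | hv
  · rw [norm_zero, mul_zero]
    exact norm_nonneg _
  set T := ((D - μ • (1 : Hm →L[ℂ] Hm)) + adjoint K ∘L (A ∘L (R ∘L (A ∘L K)))) with hT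
  set w : Hp := K v with hw
  set u : Hp := R w with hu
  have hAu : A u = w + μ • u := by
    have h := hR1 w
    rw [ContinuousLinearMap.sub_apply, ContinuousLinearMap.smul_apply,
      ContinuousLinearMap.one_apply, ← hu] at h
    rw [← h]; abel
  have hARA : A (R (A w)) = A w + μ • w + (μ ^ 2) • u := by
    have h1 : A w = (A - μ • 1) w + μ • w := by
      rw [ContinuousLinearMap.sub_apply, ContinuousLinearMap.smul_apply,
        ContinuousLinearMap.one_apply]; abel
    have h2 : R (A w) = w + μ • u := by
      rw [h1, map_add, hR2 w, map_smul, ← hu]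
    rw [h2, map_add, map_smul, hAu, smul_add, smul_smul, pow_two]
    abel
  have hTv : T v = D v - μ • v + (adjoint K) (A w) + μ • (adjoint K) w
      + (μ ^ 2) • (adjoint K) u := by
    rw [hT]
    simp only [ContinuousLinearMap.add_apply, ContinuousLinearMap.sub_apply,
      ContinuousLinearMap.smul_apply, ContinuousLinearMap.one_apply,
      ContinuousLinearMap.comp_apply]
    rw [← hw, hARA, map_add, map_add, map_smul, map_smul]
    abel
  have hsymm := hA.isSymmetric
  have hsymmD := hD.isSymmetric
  have hreal : ∀ t : Hp, (inner ℂ (A t) t : ℂ) = ((inner ℂ (A t) t : ℂ).re : ℂ) := by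
    intro t
    have h := hsymm t t
    simp only [ContinuousLinearMap.coe_coe] at h
    have hconj : (starRingEnd ℂ) (inner ℂ (A t) t : ℂ) = inner ℂ (A t) t := by
      rw [inner_conj_symm]; exact h.symm
    exact (Complex.conj_eq_iff_re.1 hconj).symm
  have hrealD : (inner ℂ (D v) v : ℂ) = ((inner ℂ (D v) v : ℂ).re : ℂ) := by
    have h := hsymmD v v
    simp only [ContinuousLinearMap.coe_coe] at h
    have hconj : (starRingEnd ℂ) (inner ℂ (D v) v : ℂ) = inner ℂ (D v) v := by
      rw [inner_conj_symm]; exact h.symm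
    exact (Complex.conj_eq_iff_re.1 hconj).symm
  set a : ℝ := (inner ℂ (A u) u : ℂ).re with ha_def
  set n : ℝ := ‖u‖ ^ 2 with hn_def
  set m : ℝ := ‖v‖ ^ 2 - ‖w‖ ^ 2 with hm_def
  set d : ℝ := (inner ℂ (D v) v : ℂ).re + (inner ℂ (A w) w : ℂ).re with hd_def
  have hwu : (inner ℂ w u : ℂ) = (a : ℂ) - (starRingEnd ℂ) μ * (n : ℂ) := by
    calc (inner ℂ w u : ℂ) = inner ℂ ((A - μ • 1) u) u := by rw [hR1 w]
      _ = inner ℂ (A u) u - (starRingEnd ℂ) μ * inner ℂ u u := by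
          rw [ContinuousLinearMap.sub_apply, ContinuousLinearMap.smul_apply,
            ContinuousLinearMap.one_apply, inner_sub_left, inner_smul_left]
      _ = (a : ℂ) - (starRingEnd ℂ) μ * (n : ℂ) := by
          have h8 : (inner ℂ u u : ℂ) = ((n : ℝ) : ℂ) := by
            rw [@inner_self_eq_norm_sq_to_K ℂ, hn_def]; norm_cast
          rw [hreal u, h8, ha_def]
  have hz : (inner ℂ v (T v) : ℂ)
      = (d : ℂ) - μ * (m : ℂ) + μ ^ 2 * ((a : ℂ) - (starRingEnd ℂ) μ * (n : ℂ)) := by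
    rw [hTv]
    rw [inner_add_right, inner_add_right, inner_add_right, inner_sub_right,
      inner_smul_right, inner_smul_right, inner_smul_right]
    rw [adjoint_inner_right, adjoint_inner_right, adjoint_inner_right]
    rw [← hw, ← hwu]
    have h1 : (inner ℂ v (D v) : ℂ) = ((inner ℂ (D v) v : ℂ).re : ℂ) := by
      rw [← hrealD, ← inner_conj_symm v (D v), hrealD]
      simp
    have h2 : (inner ℂ w (A w) : ℂ) = ((inner ℂ (A w) w : ℂ).re : ℂ) := by
      have h := hsymm w w
      simp only [ContinuousLinearMap.coe_coe] at h
      rw [← h]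
      exact hreal w
    have h3 : (inner ℂ v v : ℂ) = ((‖v‖ : ℂ)) ^ 2 := @inner_self_eq_norm_sq_to_K ℂ _ _ _ _ v
    have h4 : (inner ℂ w w : ℂ) = ((‖w‖ : ℂ)) ^ 2 := @inner_self_eq_norm_sq_to_K ℂ _ _ _ _ w
    rw [h1, h2, h3, h4, hd_def, hm_def]
    push_cast
    ring
  have him : (inner ℂ v (T v) : ℂ).im
      = -μ.im * (m - 2 * μ.re * a + (μ.re ^ 2 + μ.im ^ 2) * n) := by
    rw [hz]
    simp only [Complex.add_im, Complex.add_re, Complex.sub_im, Complex.sub_re,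
      Complex.mul_im, Complex.mul_re, Complex.ofReal_re, Complex.ofReal_im,
      Complex.conj_re, Complex.conj_im, pow_two]
    ring
  obtain ⟨α, hα, hApos'⟩ := hApos
  have ha_nonneg : 0 ≤ a := le_trans (by positivity) (hApos' u)
  have hn_nonneg : 0 ≤ n := by rw [hn_def]; positivity
  have ha_le : a ≤ aPlus * n := by rw [hn_def]; exact nr_le A aPlus haPlus u
  have hkey : 2 * μ.re * a ≤ (μ.re ^ 2 + μ.im ^ 2) * n := by
    rcases le_or_gt 0 μ.re with hx | hx
    · nlinarith
    · nlinarith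
  have hm_ge : (1 - ‖K‖ ^ 2) * ‖v‖ ^ 2 ≤ m := by
    have h := K.le_opNorm v
    have hKn : (0:ℝ) ≤ ‖K‖ := norm_nonneg K
    rw [hm_def, hw]
    nlinarith [norm_nonneg (K v), norm_nonneg v]
  have habs : ((1 - ‖K‖ ^ 2) * |μ.im|) * ‖v‖ ^ 2 ≤ |(inner ℂ v (T v) : ℂ).im| := by
    rw [him, abs_mul, abs_neg]
    have h1 : |m - 2 * μ.re * a + (μ.re ^ 2 + μ.im ^ 2) * n|
        = m - 2 * μ.re * a + (μ.re ^ 2 + μ.im ^ 2) * n := by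
      rw [abs_of_nonneg]
      have hK2 : ‖K‖ ^ 2 ≤ 1 := by nlinarith [norm_nonneg K]
      have h0 : 0 ≤ (1 - ‖K‖ ^ 2) * ‖v‖ ^ 2 := mul_nonneg (by linarith) (sq_nonneg _)
      linarith [hm_ge, hkey]
    rw [h1]
    have hK2 : ‖K‖ ^ 2 ≤ 1 := by nlinarith [norm_nonneg K]
    have h0 : 0 ≤ (1 - ‖K‖ ^ 2) * ‖v‖ ^ 2 := mul_nonneg (by linarith) (sq_nonneg _)
    nlinarith [abs_nonneg μ.im, hm_ge, hkey]
  have hnorm : |(inner ℂ v (T v) : ℂ).im| ≤ ‖v‖ * ‖T v‖ := by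
    refine le_trans (Complex.abs_im_le_norm _) ?_
    exact norm_inner_le_norm v (T v)
  have hvn : (0:ℝ) < ‖v‖ := norm_pos_iff.2 hv
  have hfin : (((1 - ‖K‖ ^ 2) * |μ.im|) * ‖v‖) * ‖v‖ ≤ ‖T v‖ * ‖v‖ := by
    calc (((1 - ‖K‖ ^ 2) * |μ.im|) * ‖v‖) * ‖v‖ = ((1 - ‖K‖ ^ 2) * |μ.im|) * ‖v‖ ^ 2 := by
          ring
      _ ≤ ‖v‖ * ‖T v‖ := le_trans habs hnorm
      _ = ‖T v‖ * ‖v‖ := by ring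
  exact le_of_mul_le_mul_right hfin hvn

set_option maxHeartbeats 1000000 in
lemma block_isUnit {Hp Hm : Type*} [NormedAddCommGroup Hp] [InnerProductSpace ℂ Hp]
    [NormedAddCommGroup Hm] [InnerProductSpace ℂ Hm] [CompleteSpace Hp] [CompleteSpace Hm]
    (A : Hp →L[ℂ] Hp) (K : Hm →L[ℂ] Hp) (D : Hm →L[ℂ] Hm) (lam : ℂ)
    (R : Hp →L[ℂ] Hp) (T2 : Hm →L[ℂ] Hm)
    (hR1 : ∀ w, (A - lam • (1 : Hp →L[ℂ] Hp)) (R w) = w)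
    (hR2 : ∀ w, R ((A - lam • (1 : Hp →L[ℂ] Hp)) w) = w)
    (hT1 : ∀ z, ((D - lam • (1 : Hm →L[ℂ] Hm))
        + adjoint K ∘L (A ∘L (R ∘L (A ∘L K)))) (T2 z) = z)
    (hT2 : ∀ z, T2 (((D - lam • (1 : Hm →L[ℂ] Hm))
        + adjoint K ∘L (A ∘L (R ∘L (A ∘L K)))) z) = z) :
    IsUnit (blockOp A K D - lam • (1 : (Hp × Hm) →L[ℂ] (Hp × Hm))) := by
  set aop : Hp →L[ℂ] Hp := A - lam • 1 with haop
  set dop : Hm →L[ℂ] Hm := D - lam • 1 with hdop_def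
  set S2 : Hm →L[ℂ] Hm := dop + adjoint K ∘L (A ∘L (R ∘L (A ∘L K))) with hS2
  have hdop : ∀ z : Hm, dop z = S2 z - (adjoint K) (A (R (A (K z)))) := by
    intro z
    rw [hS2]
    simp only [ContinuousLinearMap.add_apply, ContinuousLinearMap.comp_apply]
    abel
  have hSl : ∀ p : Hp × Hm,
      (blockOp A K D - lam • (1 : (Hp × Hm) →L[ℂ] (Hp × Hm))) p
        = (aop p.1 - A (K p.2), (adjoint K) (A p.1) + dop p.2) := by
    intro p
    simp only [blockOp, ContinuousLinearMap.sub_apply, ContinuousLinearMap.smul_apply,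
      ContinuousLinearMap.one_apply, ContinuousLinearMap.prod_apply,
      ContinuousLinearMap.comp_apply, ContinuousLinearMap.add_apply,
      ContinuousLinearMap.coe_fst', ContinuousLinearMap.coe_snd', haop, hdop_def]
    refine Prod.ext ?_ ?_ <;>
      · simp only [Prod.fst_sub, Prod.snd_sub, Prod.smul_fst, Prod.smul_snd,
          ContinuousLinearMap.sub_apply, ContinuousLinearMap.smul_apply,
          ContinuousLinearMap.one_apply]
        abel
  set G : Hp →L[ℂ] Hm := T2 ∘L (adjoint K ∘L (A ∘L R)) with hG
  set E1 : (Hp × Hm) →L[ℂ] Hp :=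
    R ∘L (fst ℂ Hp Hm) - R ∘L (A ∘L (K ∘L (G ∘L (fst ℂ Hp Hm))))
      + R ∘L (A ∘L (K ∘L (T2 ∘L (snd ℂ Hp Hm)))) with hE1
  set E2 : (Hp × Hm) →L[ℂ] Hm := T2 ∘L (snd ℂ Hp Hm) - G ∘L (fst ℂ Hp Hm) with hE2
  set E : (Hp × Hm) →L[ℂ] (Hp × Hm) := E1.prod E2 with hE
  have hE1app : ∀ p : Hp × Hm,
      E1 p = R p.1 - R (A (K (T2 ((adjoint K) (A (R p.1)))))) + R (A (K (T2 p.2))) := by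
    intro p
    rw [hE1, hG]
    simp only [ContinuousLinearMap.add_apply, ContinuousLinearMap.sub_apply,
      ContinuousLinearMap.comp_apply, ContinuousLinearMap.coe_fst',
      ContinuousLinearMap.coe_snd']
  have hE2app : ∀ p : Hp × Hm,
      E2 p = T2 p.2 - T2 ((adjoint K) (A (R p.1))) := by
    intro p
    rw [hE2, hG]
    simp only [ContinuousLinearMap.sub_apply, ContinuousLinearMap.comp_apply,
      ContinuousLinearMap.coe_fst', ContinuousLinearMap.coe_snd']
  refine isUnit_iff_exists.2 ⟨E, ?_, ?_⟩
  · -- Sl * E = 1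
    refine ContinuousLinearMap.ext fun p => ?_
    rw [ContinuousLinearMap.mul_apply, ContinuousLinearMap.one_apply]
    rw [hSl (E p)]
    have h1 : (E p).1 = E1 p := rfl
    have h2 : (E p).2 = E2 p := rfl
    rw [h1, h2, hE1app, hE2app]
    have hfst : aop (R p.1 - R (A (K (T2 ((adjoint K) (A (R p.1)))))) + R (A (K (T2 p.2))))
        - A (K (T2 p.2 - T2 ((adjoint K) (A (R p.1))))) = p.1 := by
      simp only [map_sub, map_add, hR1]
      abel
    have hsnd : (adjoint K) (A (R p.1 - R (A (K (T2 ((adjoint K) (A (R p.1))))))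
          + R (A (K (T2 p.2)))))
        + dop (T2 p.2 - T2 ((adjoint K) (A (R p.1)))) = p.2 := by
      simp only [map_sub, map_add, hdop, hT1]
      abel
    exact Prod.ext hfst hsnd
  · -- E * Sl = 1
    refine ContinuousLinearMap.ext fun p => ?_
    rw [ContinuousLinearMap.mul_apply, ContinuousLinearMap.one_apply]
    rw [hSl p]
    have h1 : ∀ q : Hp × Hm, E q = (E1 q, E2 q) := fun q => rfl
    rw [h1, hE1app, hE2app]
    have hq1 : (aop p.1 - A (K p.2), (adjoint K) (A p.1) + dop p.2).1
        = aop p.1 - A (K p.2) := rfl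
    have hq2 : (aop p.1 - A (K p.2), (adjoint K) (A p.1) + dop p.2).2
        = (adjoint K) (A p.1) + dop p.2 := rfl
    rw [hq1, hq2]
    have key : ∀ z : Hm, T2 (dop z) = z - T2 ((adjoint K) (A (R (A (K z))))) := by
      intro z
      rw [hdop z, map_sub]
      congr 1
      exact hT2 z -- T2 (S2 z) = z
    have hfst : R (aop p.1 - A (K p.2))
        - R (A (K (T2 ((adjoint K) (A (R (aop p.1 - A (K p.2))))))))
        + R (A (K (T2 ((adjoint K) (A p.1) + dop p.2)))) = p.1 := by
      simp only [map_sub, map_add, hR2, key]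
      abel
    have hsnd : T2 ((adjoint K) (A p.1) + dop p.2)
        - T2 ((adjoint K) (A (R (aop p.1 - A (K p.2))))) = p.2 := by
      simp only [map_sub, map_add, hR2, key]
      abel
    exact Prod.ext hfst hsnd


theorem stmt5 {Hp Hm : Type*} [NormedAddCommGroup Hp] [InnerProductSpace ℂ Hp]
    [NormedAddCommGroup Hm] [InnerProductSpace ℂ Hm] [CompleteSpace Hp] [CompleteSpace Hm]
    (A : Hp →L[ℂ] Hp) (K : Hm →L[ℂ] Hp) (D : Hm →L[ℂ] Hm)
    (hA : IsSelfAdjoint A)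
    (hApos : ∃ α > (0:ℝ), ∀ x : Hp, α * ‖x‖ ^ 2 ≤ (inner ℂ (A x) x : ℂ).re)
    (hK : ‖K‖ < 1)
    (hD : IsSelfAdjoint D)
    (hDK : ∃ c > (0:ℝ), ∀ y : Hm,
      c * ‖y‖ ^ 2 ≤ (inner ℂ ((D + (adjoint K) ∘L A ∘L K) y) y : ℂ).re)
    -- `aPlus = sup W(A)`
    (aPlus : ℝ)
    (haPlus : IsLUB {r : ℝ | ∃ x : Hp, ‖x‖ = 1 ∧ r = (inner ℂ (A x) x : ℂ).re} aPlus)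
    (lam : ℂ) (him : lam.im ≠ 0)
    (hcond : 0 ≤ lam.re ^ 2 - 2 * aPlus * lam.re + lam.im ^ 2) :
    lam ∉ spectrum ℂ (blockOp A K D) := by
  rw [spectrum.notMem_iff]
  have hneg : algebraMap ℂ ((Hp × Hm) →L[ℂ] (Hp × Hm)) lam - blockOp A K D
      = -(blockOp A K D - lam • 1) := by
    rw [Algebra.algebraMap_eq_smul_one, neg_sub]
  rw [hneg]
  suffices hmain : IsUnit (blockOp A K D - lam • (1 : (Hp × Hm) →L[ℂ] (Hp × Hm))) from
    hmain.neg
  -- Step 1 : `A - lam` is invertible since `A` is self-adjoint and `lam` is non-real.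
  have hAspec : lam ∉ spectrum ℂ A := by
    intro h
    exact him (by rw [hA.mem_spectrum_eq_re h, Complex.ofReal_im])
  have hAunit : IsUnit (A - lam • (1 : Hp →L[ℂ] Hp)) := by
    have h := spectrum.notMem_iff.1 hAspec
    rw [Algebra.algebraMap_eq_smul_one] at h
    have h2 := h.neg
    rwa [neg_sub] at h2
  set R : Hp →L[ℂ] Hp := ↑(hAunit.unit⁻¹) with hRdef
  have hR1op : (A - lam • (1 : Hp →L[ℂ] Hp)) * R = 1 := by
    rw [hRdef]
    exact hAunit.mul_val_inv
  have hR2op : R * (A - lam • (1 : Hp →L[ℂ] Hp)) = 1 := by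
    rw [hRdef]
    exact hAunit.val_inv_mul
  have hR1 : ∀ w, (A - lam • (1 : Hp →L[ℂ] Hp)) (R w) = w := fun w => by
    have h := ContinuousLinearMap.ext_iff.1 hR1op w
    simpa [ContinuousLinearMap.mul_apply] using h
  have hR2 : ∀ w, R ((A - lam • (1 : Hp →L[ℂ] Hp)) w) = w := fun w => by
    have h := ContinuousLinearMap.ext_iff.1 hR2op w
    simpa [ContinuousLinearMap.mul_apply] using h
  -- conjugate versions for the adjoint
  have hstar_a : star (A - lam • (1 : Hp →L[ℂ] Hp))
      = A - (starRingEnd ℂ) lam • (1 : Hp →L[ℂ] Hp) := by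
    rw [star_sub, star_smul, star_one, hA.star_eq]
    rfl
  have hR1cop : (A - (starRingEnd ℂ) lam • (1 : Hp →L[ℂ] Hp)) * adjoint R = 1 := by
    have h := congrArg star hR2op
    rw [star_mul, hstar_a, star_one, star_eq_adjoint] at h
    exact h
  have hR2cop : adjoint R * (A - (starRingEnd ℂ) lam • (1 : Hp →L[ℂ] Hp)) = 1 := by
    have h := congrArg star hR1op
    rw [star_mul, hstar_a, star_one, star_eq_adjoint] at h
    exact h
  have hR1c : ∀ w, (A - (starRingEnd ℂ) lam • (1 : Hp →L[ℂ] Hp)) ((adjoint R) w) = w :=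
    fun w => by
      have h := ContinuousLinearMap.ext_iff.1 hR1cop w
      simpa [ContinuousLinearMap.mul_apply] using h
  have hR2c : ∀ w, (adjoint R) ((A - (starRingEnd ℂ) lam • (1 : Hp →L[ℂ] Hp)) w) = w :=
    fun w => by
      have h := ContinuousLinearMap.ext_iff.1 hR2cop w
      simpa [ContinuousLinearMap.mul_apply] using h
  -- Step 2 : the Schur complement is invertible.
  set S2 : Hm →L[ℂ] Hm :=
    (D - lam • (1 : Hm →L[ℂ] Hm)) + adjoint K ∘L (A ∘L (R ∘L (A ∘L K))) with hS2def
  have hlow : ∀ v : Hm, ((1 - ‖K‖ ^ 2) * |lam.im|) * ‖v‖ ≤ ‖S2 v‖ :=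
    schur_lower A K D hA hApos hK hD aPlus haPlus lam hcond R hR1 hR2
  have hadj : adjoint S2 = (D - (starRingEnd ℂ) lam • (1 : Hm →L[ℂ] Hm))
      + adjoint K ∘L (A ∘L ((adjoint R) ∘L (A ∘L K))) := by
    rw [hS2def, map_add]
    congr 1
    · rw [← star_eq_adjoint (D - lam • (1 : Hm →L[ℂ] Hm)), star_sub, star_smul, star_one,
        hD.star_eq]
      rfl
    · simp only [adjoint_comp, adjoint_adjoint, hA.adjoint_eq]
      simp only [← comp_assoc]
  have hcond' : 0 ≤ ((starRingEnd ℂ) lam).re ^ 2 - 2 * aPlus * ((starRingEnd ℂ) lam).re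
      + ((starRingEnd ℂ) lam).im ^ 2 := by
    simpa [Complex.conj_re, Complex.conj_im] using hcond
  have hlow0 := schur_lower A K D hA hApos hK hD aPlus haPlus ((starRingEnd ℂ) lam) hcond'
    (adjoint R) hR1c hR2c
  have hlow' : ∀ v : Hm, ((1 - ‖K‖ ^ 2) * |lam.im|) * ‖v‖ ≤ ‖adjoint S2 v‖ := by
    intro v
    rw [hadj]
    have h := hlow0 v
    simpa [Complex.conj_im, abs_neg] using h
  have hc : 0 < (1 - ‖K‖ ^ 2) * |lam.im| := by
    have h1 : (0:ℝ) ≤ ‖K‖ := norm_nonneg K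
    have h2 : ‖K‖ ^ 2 < 1 := by nlinarith
    exact mul_pos (by linarith) (abs_pos.2 him)
  have hS2unit : IsUnit S2 := isUnit_of_bddBelow_adj S2 hc hlow hlow'
  set T2 : Hm →L[ℂ] Hm := ↑(hS2unit.unit⁻¹) with hT2def
  have hT1op : S2 * T2 = 1 := by
    rw [hT2def]
    exact hS2unit.mul_val_inv
  have hT2op : T2 * S2 = 1 := by
    rw [hT2def]
    exact hS2unit.val_inv_mul
  have hT1 : ∀ z, S2 (T2 z) = z := fun z => by
    have h := ContinuousLinearMap.ext_iff.1 hT1op z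
    simpa [ContinuousLinearMap.mul_apply] using h
  have hT2 : ∀ z, T2 (S2 z) = z := fun z => by
    have h := ContinuousLinearMap.ext_iff.1 hT2op z
    simpa [ContinuousLinearMap.mul_apply] using h
  exact block_isUnit A K D lam R T2 hR1 hR2 (by rw [hS2def] at hT1; exact hT1)
    (by rw [hS2def] at hT2; exact hT2)
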